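/- Let d ≥ 1 be an integer, ε > 0, β ∈ (0,1), λ ∈ ℝ, and let K = [−2d², 6d²] × [−2d², 2d²] ⊆ ℝ². Let q : ℝ² → ℝ be a bounded measurable function, and suppose the two-dimensional Lebesgue measure of {p ∈ K : q(p) ≥ λ} is at least 1/(4d⁴). Then ∫_{{p ∈ K : q(p) < λ − (8/ε)·ln(2d/β)}} exp(ε·q(p)) dp ≤ β · ∫_K exp(ε·q(p)) dp. Equivalently, the continuous exponential mechanism on K with density proportional to exp(ε·q) outputs a point of quality below λ − (8/ε)·ln(2d/β) with probability at most β. -/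

import Mathlib

open MeasureTheory

/-- The parameter space `K = [−2d², 6d²] × [−2d², 2d²]` of bounded-coefficient
halfplanes over the grid `{0,…,d}²`. -/
def Kbox (d : ℕ) : Set (ℝ × ℝ) :=
  Set.Icc (-(2 * (d : ℝ) ^ 2)) (6 * (d : ℝ) ^ 2) ×ˢ
    Set.Icc (-(2 * (d : ℝ) ^ 2)) (2 * (d : ℝ) ^ 2)

/-- Utility of the continuous exponential mechanism on `K`: if the set of points of `K`
with quality at least `λ` has area at least `1/(4d⁴)`, then the mechanism (with density
proportional to `exp(ε·q)`) outputs a point of quality below `λ − (8/ε)·ln(2d/β)` with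
probability at most `β`. -/
theorem stmt12 (d : ℕ) (hd : 1 ≤ d) (ε β lam : ℝ) (hε : 0 < ε)
    (hβ : β ∈ Set.Ioo (0 : ℝ) 1)
    (q : ℝ × ℝ → ℝ) (hq : Measurable q) (hqbd : ∃ C, ∀ p, |q p| ≤ C)
    (harea : ENNReal.ofReal (1 / (4 * (d : ℝ) ^ 4)) ≤
      volume {p ∈ Kbox d | lam ≤ q p}) :
    ∫ p in {p ∈ Kbox d | q p < lam - 8 / ε * Real.log (2 * d / β)}, Real.exp (ε * q p)
      ≤ β * ∫ p in Kbox d, Real.exp (ε * q p) := by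
  obtain ⟨C, hC⟩ := hqbd
  obtain ⟨hβ0, hβ1⟩ := hβ
  set D := (d : ℝ) with hDdef
  have hD1 : (1 : ℝ) ≤ D := by rw [hDdef]; exact_mod_cast hd
  have hD0 : (0 : ℝ) < D := by linarith
  set t := lam - 8 / ε * Real.log (2 * D / β) with ht
  set B := {p ∈ Kbox d | q p < t} with hBdef
  set G := {p ∈ Kbox d | lam ≤ q p} with hGdef
  have hKmeas : MeasurableSet (Kbox d) := measurableSet_Icc.prod measurableSet_Icc
  have hKvol : volume (Kbox d) = ENNReal.ofReal (32 * D ^ 4) := by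
    rw [Kbox, MeasureTheory.Measure.volume_eq_prod, Measure.prod_prod,
      Real.volume_Icc, Real.volume_Icc, ← ENNReal.ofReal_mul (by nlinarith [sq_nonneg D])]
    congr 1
    ring
  have hKfin : volume (Kbox d) ≠ ⊤ := by rw [hKvol]; exact ENNReal.ofReal_ne_top
  have hmeasE : Measurable fun p => Real.exp (ε * q p) :=
    Real.measurable_exp.comp (hq.const_mul ε)
  have hint : IntegrableOn (fun p => Real.exp (ε * q p)) (Kbox d) := by
    apply Measure.integrableOn_of_bounded hKfin hmeasE.aestronglyMeasurable
      (M := Real.exp (ε * C))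
    filter_upwards with p
    rw [Real.norm_eq_abs, abs_of_pos (Real.exp_pos _)]
    exact Real.exp_le_exp.2 (mul_le_mul_of_nonneg_left ((abs_le.1 (hC p)).2) hε.le)
  have hBmeas : MeasurableSet B :=
    hKmeas.inter (hq measurableSet_Iio)
  have hGmeas : MeasurableSet G :=
    hKmeas.inter (hq measurableSet_Ici)
  have hBsub : B ⊆ Kbox d := fun p hp => hp.1
  have hGsub : G ⊆ Kbox d := fun p hp => hp.1
  have hGfin : volume G ≠ ⊤ := ne_top_of_le_ne_top hKfin (measure_mono hGsub)
  -- lower bound on total integral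
  have h1 : 1 / (4 * D ^ 4) ≤ (volume G).toReal := by
    rw [← ENNReal.ofReal_le_iff_le_toReal hGfin]
    exact harea
  have h2 : ∫ _p in G, Real.exp (ε * lam) ≤ ∫ p in G, Real.exp (ε * q p) := by
    apply setIntegral_mono_on
    · exact integrableOn_const ((measure_mono hGsub).trans_lt hKfin.lt_top).ne
    · exact hint.mono_set hGsub
    · exact hGmeas
    · exact fun p hp => Real.exp_le_exp.2 (mul_le_mul_of_nonneg_left hp.2 hε.le)
  rw [setIntegral_const, smul_eq_mul, measureReal_def] at h2
  have h3 : ∫ p in G, Real.exp (ε * q p) ≤ ∫ p in Kbox d, Real.exp (ε * q p) :=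
    setIntegral_mono_set hint (Filter.Eventually.of_forall fun p => (Real.exp_pos _).le)
      (HasSubset.Subset.eventuallyLE hGsub)
  have hlow : Real.exp (ε * lam) * (1 / (4 * D ^ 4)) ≤ ∫ p in Kbox d, Real.exp (ε * q p) := by
    have := mul_le_mul_of_nonneg_right h1 (Real.exp_pos (ε * lam)).le
    nlinarith [Real.exp_pos (ε * lam)]
  -- upper bound on bad integral
  have h4 : ∫ p in B, Real.exp (ε * q p) ≤ ∫ _p in B, Real.exp (ε * t) := by
    apply setIntegral_mono_on
    · exact hint.mono_set hBsub
    · exact integrableOn_const ((measure_mono hBsub).trans_lt hKfin.lt_top).ne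
    · exact hBmeas
    · exact fun p hp => Real.exp_le_exp.2 (mul_le_mul_of_nonneg_left hp.2.le hε.le)
  rw [setIntegral_const, smul_eq_mul, measureReal_def] at h4
  have h5 : (volume B).toReal ≤ 32 * D ^ 4 := by
    have hm : volume B ≤ ENNReal.ofReal (32 * D ^ 4) := hKvol ▸ measure_mono hBsub
    calc (volume B).toReal ≤ (ENNReal.ofReal (32 * D ^ 4)).toReal :=
          ENNReal.toReal_mono ENNReal.ofReal_ne_top hm
      _ = 32 * D ^ 4 := ENNReal.toReal_ofReal (by positivity)
  have hup : ∫ p in B, Real.exp (ε * q p) ≤ 32 * D ^ 4 * Real.exp (ε * t) := by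
    nlinarith [Real.exp_pos (ε * t)]
  -- key arithmetic
  have hx : (0 : ℝ) < 2 * D / β := by positivity
  have hexp : Real.exp (ε * t) = Real.exp (ε * lam) * (β ^ 8 / (2 * D) ^ 8) := by
    have hεt : ε * t = ε * lam - Real.log ((2 * D / β) ^ 8) := by
      rw [Real.log_pow, ht]
      push_cast
      field_simp
    rw [hεt, Real.exp_sub, Real.exp_log (by positivity), div_pow]
    field_simp
  have hkey : 32 * D ^ 4 * Real.exp (ε * t) ≤ β * (Real.exp (ε * lam) * (1 / (4 * D ^ 4))) := by
    rw [hexp]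
    have hβ8 : β ^ 8 ≤ β := pow_le_of_le_one hβ0.le hβ1.le (by norm_num)
    have key2 : 32 * D ^ 4 * (β ^ 8 / (2 * D) ^ 8) ≤ β * (1 / (4 * D ^ 4)) := by
      have h1 : 32 * D ^ 4 * (β ^ 8 / (2 * D) ^ 8) = β ^ 8 / (8 * D ^ 4) := by
        field_simp
        ring
      have h2' : β ^ 8 / (8 * D ^ 4) ≤ β / (4 * D ^ 4) :=
        div_le_div₀ hβ0.le hβ8 (by positivity) (by nlinarith [pow_pos hD0 4])
      rw [h1]
      calc β ^ 8 / (8 * D ^ 4) ≤ β / (4 * D ^ 4) := h2'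
        _ = β * (1 / (4 * D ^ 4)) := by ring
    nlinarith [Real.exp_pos (ε * lam), mul_le_mul_of_nonneg_left key2 (Real.exp_pos (ε * lam)).le]
  calc ∫ p in B, Real.exp (ε * q p) ≤ 32 * D ^ 4 * Real.exp (ε * t) := hup
    _ ≤ β * (Real.exp (ε * lam) * (1 / (4 * D ^ 4))) := hkey
    _ ≤ β * ∫ p in Kbox d, Real.exp (ε * q p) := by
        exact mul_le_mul_of_nonneg_left hlow hβ0.le
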